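/- arXiv:1707.05677 — 3 statements merged into one kernel-verified Lean document; each statement's English description precedes it below -/
import Mathlib

section
/- Every proper subgroup of the symmetric group S4 is isomorphic to one of the following groups: the trivial group, C2, C3, C2 × C2, C4, S3, the dihedral group of order 8, or A4. -/
open Equiv Subgroup Pointwise

namespace S4Classification

/-- The 4-cycle (0 1 2 3) in `Perm (Fin 4)`. -/
def rot4 : Perm (Fin 4) := finRotate 4

/-- The transposition (1 3) in `Perm (Fin 4)`. -/
def sw13 : Perm (Fin 4) := Equiv.swap 1 3

/-- Explicit embedding of the dihedral group of order 8 into S4. -/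
def d8fun : DihedralGroup 4 → Perm (Fin 4)
  | .r i => rot4 ^ i.val
  | .sr i => sw13 * rot4 ^ i.val

lemma d8fun_mul : ∀ x y, d8fun (x * y) = d8fun x * d8fun y := by decide

def d8hom : DihedralGroup 4 →* Perm (Fin 4) := MonoidHom.mk' d8fun d8fun_mul

lemma d8hom_inj : Function.Injective d8hom := by
  show Function.Injective d8fun
  decide

lemma cardS4 : Nat.card (Perm (Fin 4)) = 24 := by
  simp [Nat.card_eq_fintype_card, Fintype.card_perm]
  rfl

lemma fact24 : (Nat.factorization 24) 2 = 3 := by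
  have h : (24:ℕ) = 2^3 * 3 := by norm_num
  rw [h, Nat.factorization_mul (by norm_num) (by norm_num),
    Nat.Prime.factorization_pow Nat.prime_two]
  simp [Nat.factorization_eq_zero_iff]

lemma normal_conj_of_index_two {G : Type*} [Group G] (K : Subgroup G) (h : K.index = 2)
    {n : G} (hn : n ∈ K) (g : G) : g * n * g⁻¹ ∈ K := by
  have h1 : g * (n * g⁻¹) ∈ K ↔ (g ∈ K ↔ n * g⁻¹ ∈ K) := Subgroup.mul_mem_iff_of_index_two h
  have h2 : n * g⁻¹ ∈ K ↔ (n ∈ K ↔ g⁻¹ ∈ K) := Subgroup.mul_mem_iff_of_index_two h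
  have h3 : g * g⁻¹ ∈ K ↔ (g ∈ K ↔ g⁻¹ ∈ K) := Subgroup.mul_mem_iff_of_index_two h
  have h4 : g * g⁻¹ ∈ K := by simp [one_mem]
  rw [mul_assoc]
  tauto

/-- An element of order 3 in `Perm (Fin 4)` has a fixed point. -/
lemma threeCycle_fix : ∀ b : Perm (Fin 4), b ^ 3 = 1 → b ≠ 1 → ∃ x, b x = x := by decide

set_option maxRecDepth 100000 in
/-- Anything normalizing the cyclic group generated by an order-3 element of S4 fixes
its fixed points. -/
lemma norm3_fix : ∀ b g : Perm (Fin 4), b ^ 3 = 1 → b ≠ 1 →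
    (g * b * g⁻¹ = b ∨ g * b * g⁻¹ = b * b) → ∀ x : Fin 4, b x = x → g x = x := by decide

/-- embedding Fin 3 into Fin 4 -/
def emb3 : Fin 3 ↪ Fin 4 := Fin.castLEEmb (by norm_num)

noncomputable def phi3 : Perm (Fin 3) →* Perm (Fin 4) := Perm.viaEmbeddingHom emb3

lemma phi3_inj : Function.Injective phi3 := Perm.viaEmbeddingHom_injective emb3

lemma card_phi3_range : Nat.card phi3.range = 6 := by
  rw [Nat.card_congr (MonoidHom.ofInjective phi3_inj).toEquiv.symm]
  simp [Nat.card_eq_fintype_card, Fintype.card_perm]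
  rfl

lemma phi3_fixes (q : Perm (Fin 3)) : (phi3 q) 3 = 3 := by
  show (Perm.viaEmbeddingHom emb3 q) 3 = 3
  rw [Perm.viaEmbeddingHom_apply]
  apply Perm.viaEmbedding_apply_of_notMem
  rintro ⟨x, hx⟩
  have h2 := x.2
  have h3 : (x : ℕ) = 3 := by
    have := congrArg Fin.val hx
    simpa [emb3] using this
  omega

/-- The stabilizer of `3` in `Perm (Fin 4)`. -/
def stab3 : Subgroup (Perm (Fin 4)) := MulAction.stabilizer (Perm (Fin 4)) (3 : Fin 4)

lemma mem_stab3 {p : Perm (Fin 4)} : p ∈ stab3 ↔ p 3 = 3 := Iff.rfl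

lemma card_stab3 : Nat.card stab3 = 6 := by
  have : Nat.card stab3 = Nat.card {p : Perm (Fin 4) // p 3 = 3} :=
    Nat.card_congr (Equiv.subtypeEquivRight fun p => mem_stab3)
  rw [this, Nat.card_eq_fintype_card]
  decide

lemma phi3_range_eq_stab3 : phi3.range = stab3 := by
  apply Subgroup.eq_of_le_of_card_ge
  · rintro p ⟨q, rfl⟩
    exact phi3_fixes q
  · rw [card_phi3_range, card_stab3]

section Cases

variable (H : Subgroup (Perm (Fin 4)))

lemma case_one (h : Nat.card H = 1) : Nonempty (H ≃* Multiplicative (ZMod 1)) := by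
  obtain ⟨hs, -⟩ := Nat.card_eq_one_iff_unique.mp h
  haveI : Unique H := ⟨⟨1⟩, fun a => Subsingleton.elim a 1⟩
  exact ⟨MulEquiv.ofUnique⟩

lemma case_prime (p : ℕ) [Fact p.Prime] (h : Nat.card H = p) :
    Nonempty (H ≃* Multiplicative (ZMod p)) := by
  haveI := isCyclic_of_prime_card h
  obtain ⟨e⟩ : Nonempty (Multiplicative (ZMod (Nat.card H)) ≃* Multiplicative (ZMod p)) := by
    rw [h]; exact ⟨MulEquiv.refl _⟩
  exact ⟨((zmodCyclicMulEquiv this).symm.trans e)⟩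

lemma case_four (h : Nat.card H = 4) :
    Nonempty (H ≃* (Multiplicative (ZMod 2) × Multiplicative (ZMod 2))) ∨
    Nonempty (H ≃* Multiplicative (ZMod 4)) := by
  by_cases hc : ∃ g : H, orderOf g = 4
  · obtain ⟨g, hg⟩ := hc
    haveI := isCyclic_of_orderOf_eq_card g (by rw [hg, h])
    right
    obtain ⟨e⟩ : Nonempty (Multiplicative (ZMod (Nat.card H)) ≃* Multiplicative (ZMod 4)) := by
      rw [h]; exact ⟨MulEquiv.refl _⟩
    exact ⟨((zmodCyclicMulEquiv this).symm.trans e)⟩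
  · left
    push_neg at hc
    haveI : Finite H := Nat.finite_of_card_ne_zero (by omega)
    haveI : Nontrivial H := Finite.one_lt_card_iff_nontrivial.mp (by omega)
    have hexp : ∀ g : H, g ^ 2 = 1 := by
      intro g
      have hd : orderOf g ∣ 4 := by
        have hd0 := orderOf_dvd_natCard g
        rwa [h] at hd0
      have h4 := hc g
      have hpos : 0 < orderOf g := orderOf_pos g
      have hle : orderOf g ≤ 4 := Nat.le_of_dvd (by norm_num) hd
      have : orderOf g ∣ 2 := by interval_cases h5 : (orderOf g) <;> omega
      exact orderOf_dvd_iff_pow_eq_one.mp this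
    have hexp2 : Monoid.exponent H = 2 := by
      have h1 : Monoid.exponent H ∣ 2 := Monoid.exponent_dvd_of_forall_pow_eq_one hexp
      rcases (Nat.dvd_prime Nat.prime_two).mp h1 with h2 | h2
      · exfalso
        obtain ⟨g, hg⟩ := exists_ne (1 : H)
        apply hg
        calc g = g ^ Monoid.exponent H := by rw [h2, pow_one]
        _ = 1 := Monoid.pow_exponent_eq_one g
      · exact h2
    haveI : IsKleinFour H := ⟨h, hexp2⟩
    obtain ⟨e⟩ := IsKleinFour.nonempty_mulEquiv (G₁ := H)
      (G₂ := Multiplicative (ZMod 2 × ZMod 2))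
    exact ⟨e.trans (MulEquiv.prodMultiplicative (ZMod 2) (ZMod 2))⟩

lemma case_six (h : Nat.card H = 6) : Nonempty (H ≃* Perm (Fin 3)) := by
  haveI : Fact (Nat.Prime 3) := ⟨by norm_num⟩
  haveI : Finite H := Nat.finite_of_card_ne_zero (by omega)
  obtain ⟨a, ha3⟩ := exists_prime_orderOf_dvd_card' (G := H) 3 (by rw [h]; norm_num)
  have hob : orderOf (a : Perm (Fin 4)) = 3 := by rw [Subgroup.orderOf_coe, ha3]
  set b : Perm (Fin 4) := (a : Perm (Fin 4)) with hbdef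
  have hb3 : b ^ 3 = 1 := by rw [← hob]; exact pow_orderOf_eq_one b
  have hbne : b ≠ 1 := by
    intro hb1
    rw [hb1, orderOf_one] at hob
    norm_num at hob
  have hKH : Subgroup.zpowers b ≤ H := Subgroup.zpowers_le.mpr a.2
  have hcardK : Nat.card ((Subgroup.zpowers b).subgroupOf H) = 3 := by
    rw [Nat.card_congr (Subgroup.subgroupOfEquivOfLe hKH).toEquiv, Nat.card_zpowers, hob]
  have hidx : ((Subgroup.zpowers b).subgroupOf H).index = 2 := by
    have := Subgroup.card_mul_index ((Subgroup.zpowers b).subgroupOf H)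
    rw [hcardK, h] at this
    omega
  -- every element of H normalizes ⟨b⟩
  have hnorm : ∀ g : Perm (Fin 4), g ∈ H → g * b * g⁻¹ ∈ Subgroup.zpowers b := by
    intro g hg
    have hbH : b ∈ H := hKH (Subgroup.mem_zpowers b)
    have hmem : (⟨b, hbH⟩ : H) ∈ (Subgroup.zpowers b).subgroupOf H :=
      Subgroup.mem_subgroupOf.mpr (Subgroup.mem_zpowers b)
    have := normal_conj_of_index_two _ hidx hmem ⟨g, hg⟩
    exact Subgroup.mem_subgroupOf.mp this
  have hfinb : IsOfFinOrder b := isOfFinOrder_iff_pow_eq_one.mpr ⟨3, by norm_num, hb3⟩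
  have hcases : ∀ g : Perm (Fin 4), g ∈ H → g * b * g⁻¹ = b ∨ g * b * g⁻¹ = b * b := by
    intro g hg
    obtain ⟨n, hn⟩ := hfinb.mem_powers_iff_mem_zpowers.mpr (hnorm g hg)
    have hn3 : b ^ (n % 3) = g * b * g⁻¹ := by rw [← hn, ← hob, pow_mod_orderOf]
    have hlt : n % 3 < 3 := Nat.mod_lt n (by norm_num)
    interval_cases h5 : (n % 3)
    · exfalso
      rw [pow_zero] at hn3
      apply hbne
      have h6 : g * b = g := by
        have := congrArg (· * g) hn3
        simpa [mul_assoc] using this.symm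
      calc b = g⁻¹ * (g * b) := by group
      _ = g⁻¹ * g := by rw [h6]
      _ = 1 := by group
    · left; rw [← hn3, pow_one]
    · right; rw [← hn3]; rw [pow_two]
  obtain ⟨x, hx⟩ := threeCycle_fix b hb3 hbne
  have hHfix : ∀ g : Perm (Fin 4), g ∈ H → g x = x := fun g hg =>
    norm3_fix b g hb3 hbne (hcases g hg) x hx
  -- conjugate H into the stabilizer of 3
  set g0 : Perm (Fin 4) := Equiv.swap x 3 with hg0
  set H' : Subgroup (Perm (Fin 4)) := MulAut.conj g0 • H with hH'
  have hH'card : Nat.card H' = 6 := by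
    rw [← Nat.card_congr (Subgroup.equivSMul (MulAut.conj g0) H).toEquiv, h]
  have hH'le : H' ≤ stab3 := by
    intro p hp
    rw [Subgroup.mem_pointwise_smul_iff_inv_smul_mem] at hp
    have hq : (g0⁻¹ * p * g0) ∈ H := by
      rw [← MulAut.conj_inv_apply]
      exact hp
    have hqx : (g0⁻¹ * p * g0) x = x := hHfix _ hq
    have hp3 : p 3 = 3 := by
      have h1 : g0 3 = x := Equiv.swap_apply_right x 3
      have h2 : g0 x = 3 := Equiv.swap_apply_left x 3
      have h3 : (g0⁻¹ * p * g0) x = g0⁻¹ (p 3) := by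
        simp [Equiv.Perm.mul_apply, h2]
      rw [h3] at hqx
      have := congrArg g0 hqx
      simpa [h2] using this
    exact hp3
  have hH'eq : H' = stab3 := Subgroup.eq_of_le_of_card_ge hH'le (by rw [hH'card, card_stab3])
  exact ⟨(((Subgroup.equivSMul (MulAut.conj g0) H).trans
    (MulEquiv.subgroupCongr (hH'eq.trans phi3_range_eq_stab3.symm))).trans
    (MonoidHom.ofInjective phi3_inj).symm)⟩

lemma case_eight (h : Nat.card H = 8) : Nonempty (H ≃* DihedralGroup 4) := by
  haveI : Fact (Nat.Prime 2) := ⟨Nat.prime_two⟩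
  have hfact : ((Nat.card (Perm (Fin 4))).factorization) 2 = 3 := by rw [cardS4]; exact fact24
  have cardD8 : Nat.card d8hom.range = 8 := by
    rw [Nat.card_congr (MonoidHom.ofInjective d8hom_inj).toEquiv.symm,
      Nat.card_eq_fintype_card, DihedralGroup.card]
  let P : Sylow 2 (Perm (Fin 4)) := Sylow.ofCard d8hom.range (by rw [cardD8, hfact]; norm_num)
  let Q : Sylow 2 (Perm (Fin 4)) := Sylow.ofCard H (by rw [h, hfact]; norm_num)
  have e1 : Q.toSubgroup ≃* P.toSubgroup := Sylow.equiv Q P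
  exact ⟨e1.trans (MonoidHom.ofInjective d8hom_inj).symm⟩

lemma case_twelve (h : Nat.card H = 12) : Nonempty (H ≃* alternatingGroup (Fin 4)) := by
  have hidx : H.index = 2 := by
    have := Subgroup.card_mul_index H
    rw [h, cardS4] at this
    omega
  have hA : alternatingGroup (Fin 4) ≤ H := by
    rw [← Equiv.Perm.closure_three_cycles_eq_alternating, Subgroup.closure_le]
    intro σ hσ
    have h3 : σ ^ 3 = 1 := by
      rw [← Equiv.Perm.IsThreeCycle.orderOf hσ]
      exact pow_orderOf_eq_one σ
    have hsq : (σ ^ 2) ^ 2 = σ := by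
      rw [← pow_mul]
      calc σ ^ (2 * 2) = σ ^ 3 * σ := by rw [← pow_succ]
      _ = σ := by rw [h3, one_mul]
    show σ ∈ H
    rw [← hsq]
    exact Subgroup.sq_mem_of_index_two hidx (σ ^ 2)
  have hcardA : Nat.card (alternatingGroup (Fin 4)) = 12 := by
    have h2 := two_mul_card_alternatingGroup (α := Fin 4)
    have h24 : Fintype.card (Perm (Fin 4)) = 24 := by rw [← Nat.card_eq_fintype_card]; exact cardS4
    rw [Nat.card_eq_fintype_card]
    omega
  have hEq : H = alternatingGroup (Fin 4) :=
    (Subgroup.eq_of_le_of_card_ge hA (by rw [h, hcardA])).symm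
  exact ⟨MulEquiv.subgroupCongr hEq⟩

end Cases

end S4Classification

/-- Every proper subgroup of the symmetric group S4 is isomorphic to one of:
the trivial group, C2, C3, C2 × C2, C4, S3, the dihedral group of order 8, or A4. -/
theorem S4_proper_subgroup_classification
    (H : Subgroup (Equiv.Perm (Fin 4))) (hH : H ≠ ⊤) :
    Nonempty (H ≃* Multiplicative (ZMod 1)) ∨
    Nonempty (H ≃* Multiplicative (ZMod 2)) ∨
    Nonempty (H ≃* Multiplicative (ZMod 3)) ∨
    Nonempty (H ≃* (Multiplicative (ZMod 2) × Multiplicative (ZMod 2))) ∨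
    Nonempty (H ≃* Multiplicative (ZMod 4)) ∨
    Nonempty (H ≃* Equiv.Perm (Fin 3)) ∨
    Nonempty (H ≃* DihedralGroup 4) ∨
    Nonempty (H ≃* ↥(alternatingGroup (Fin 4))) := by
  open S4Classification in
  have hdvd : Nat.card H ∣ 24 := cardS4 ▸ Subgroup.card_subgroup_dvd_card H
  have hne : Nat.card H ≠ 24 := fun hc => hH (Subgroup.eq_top_of_card_eq H (by rw [hc, cardS4]))
  have hle : Nat.card H ≤ 24 := Nat.le_of_dvd (by norm_num) hdvd
  have hpos : 0 < Nat.card H := Nat.card_pos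
  haveI : Fact (Nat.Prime 2) := ⟨Nat.prime_two⟩
  haveI : Fact (Nat.Prime 3) := ⟨by norm_num⟩
  interval_cases hcard : (Nat.card H)
  · exact Or.inl (case_one H hcard)
  · exact Or.inr (Or.inl (case_prime H 2 hcard))
  · exact Or.inr (Or.inr (Or.inl (case_prime H 3 hcard)))
  · rcases case_four H hcard with h4 | h4
    · exact Or.inr (Or.inr (Or.inr (Or.inl h4)))
    · exact Or.inr (Or.inr (Or.inr (Or.inr (Or.inl h4))))
  · exact absurd hdvd (by norm_num)
  · exact Or.inr (Or.inr (Or.inr (Or.inr (Or.inr (Or.inl (case_six H hcard))))))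
  · exact absurd hdvd (by norm_num)
  · exact Or.inr (Or.inr (Or.inr (Or.inr (Or.inr (Or.inr (Or.inl (case_eight H hcard)))))))
  · exact absurd hdvd (by norm_num)
  · exact absurd hdvd (by norm_num)
  · exact absurd hdvd (by norm_num)
  · exact Or.inr (Or.inr (Or.inr (Or.inr (Or.inr (Or.inr (Or.inr (case_twelve H hcard)))))))
  · exact absurd hdvd (by norm_num)
  · exact absurd hdvd (by norm_num)
  · exact absurd hdvd (by norm_num)
  · exact absurd hdvd (by norm_num)
  · exact absurd hdvd (by norm_num)
  · exact absurd hdvd (by norm_num)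
  · exact absurd hdvd (by norm_num)
  · exact absurd hdvd (by norm_num)
  · exact absurd hdvd (by norm_num)
  · exact absurd hdvd (by norm_num)
  · exact absurd hdvd (by norm_num)
  · exact absurd rfl hne
end

section
/- Let r, s ∈ Equiv.Perm (Fin 24) be given in cycle notation (on labels 1,…,24) by r = (1 4 9 5)(3 20 24 14)(6 18 21 7)(10 16 22 23)(11 12)(13 17) and s = (1 3 9 24)(4 14 5 20)(6 22 21 10)(7 23 18 16)(11 17)(12 13). Then the subgroup of Equiv.Perm (Fin 24) generated by r and s has order 8, r and s each have order 4, r² = s², and s·r·s⁻¹ = r⁻¹; in particular this subgroup is isomorphic to the quaternion group Q8. -/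
set_option maxRecDepth 40000

def r : Equiv.Perm (Fin 24) :=
  c[1, 4, 9, 5] * c[3, 20, 24, 14] * c[6, 18, 21, 7] * c[10, 16, 22, 23] * c[11, 12] *
    c[13, 17]

def s : Equiv.Perm (Fin 24) :=
  c[1, 3, 9, 24] * c[4, 14, 5, 20] * c[6, 22, 21, 10] * c[7, 23, 18, 16] * c[11, 17] *
    c[12, 13]

def f : QuaternionGroup 2 → Equiv.Perm (Fin 24)
  | .a i => r ^ i.val
  | .xa i => s * r ^ i.val

def φ : QuaternionGroup 2 →* Equiv.Perm (Fin 24) where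
  toFun := f
  map_one' := by decide
  map_mul' := by decide

lemma hinj : Function.Injective f := by decide

lemma hrange : φ.range = Subgroup.closure ({r, s} : Set (Equiv.Perm (Fin 24))) := by
  apply le_antisymm
  · rintro x ⟨y, rfl⟩
    have hr : r ∈ Subgroup.closure ({r, s} : Set (Equiv.Perm (Fin 24))) :=
      Subgroup.subset_closure (by simp)
    have hs : s ∈ Subgroup.closure ({r, s} : Set (Equiv.Perm (Fin 24))) :=
      Subgroup.subset_closure (by simp)
    cases y with
    | a i => exact pow_mem hr _
    | xa i => exact mul_mem hs (pow_mem hr _)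
  · rw [Subgroup.closure_le]
    rintro x (rfl | rfl)
    · exact ⟨.a 1, by decide⟩
    · exact ⟨.xa 0, by decide⟩

/-- The subgroup generated by r and s has order 8, r and s have order 4, r² = s²,
s·r·s⁻¹ = r⁻¹, and this subgroup is isomorphic to the quaternion group Q8. -/
theorem Q8_subgroup_of_H75 :
    Nat.card ↥(Subgroup.closure ({r, s} : Set (Equiv.Perm (Fin 24)))) = 8 ∧
    orderOf r = 4 ∧ orderOf s = 4 ∧ r ^ 2 = s ^ 2 ∧ s * r * s⁻¹ = r⁻¹ ∧
    Nonempty (↥(Subgroup.closure ({r, s} : Set (Equiv.Perm (Fin 24)))) ≃*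
      QuaternionGroup 2) := by
  have e : QuaternionGroup 2 ≃* φ.range := MonoidHom.ofInjective (f := φ) hinj
  refine ⟨?_, ?_, ?_, by decide, by decide, ?_⟩
  · rw [← hrange, ← Nat.card_congr e.toEquiv]
    rw [Nat.card_eq_fintype_card, QuaternionGroup.card]
  · rw [orderOf_eq_iff (by norm_num)]; decide
  · rw [orderOf_eq_iff (by norm_num)]; decide
  · exact ⟨(hrange ▸ e).symm⟩
end

section
/- With r, s as in the previous statement (r = (1 4 9 5)(3 20 24 14)(6 18 21 7)(10 16 22 23)(11 12)(13 17), s = (1 3 9 24)(4 14 5 20)(6 22 21 10)(7 23 18 16)(11 17)(12 13) in Equiv.Perm (Fin 24)), the subgroup generated by r and s has exactly two orbits of size 8 on the 16-element set {1, 3, 4, 5, 6, 7, 9, 10, 14, 16, 18, 20, 21, 22, 23, 24}, namely {1, 3, 4, 5, 9, 14, 20, 24} and {6, 7, 10, 16, 18, 21, 22, 23}. -/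
set_option maxRecDepth 4000


lemma maps_inv {T : Finset (Fin 24)} {g : Equiv.Perm (Fin 24)}
    (h : ∀ y ∈ T, g y ∈ T) : ∀ y ∈ T, g⁻¹ y ∈ T := by
  have himg : T.image g = T := by
    apply Finset.eq_of_subset_of_card_le
    · intro y hy
      simp only [Finset.mem_image] at hy
      obtain ⟨z, hz, rfl⟩ := hy; exact h z hz
    · rw [Finset.card_image_of_injective _ g.injective]
  intro y hy
  rw [← himg, Finset.mem_image] at hy
  obtain ⟨z, hz, rfl⟩ := hy
  simpa using hz

lemma orbit_subset (T : Finset (Fin 24)) (hr : ∀ y ∈ T, r y ∈ T) (hs : ∀ y ∈ T, s y ∈ T)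
    (x : Fin 24) (hx : x ∈ T) :
    MulAction.orbit ↥(Subgroup.closure ({r, s} : Set (Equiv.Perm (Fin 24)))) x ⊆
      {y | y ∈ T} := by
  rintro _ ⟨⟨g, hg⟩, rfl⟩
  have key : ∀ y ∈ T, g y ∈ T := by
    induction hg using Subgroup.closure_induction with
    | mem a ha =>
      rcases ha with ha | ha
      · subst ha; exact hr
      · simp only [Set.mem_singleton_iff] at ha; subst ha; exact hs
    | one => intro y hy; simpa using hy
    | mul a b ha hb iha ihb =>
      intro y hy
      rw [show (a * b) y = a (b y) from rfl]
      exact iha (b y) (ihb y hy)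
    | inv a ha iha => exact maps_inv iha
  exact key x hx

/-- The subgroup generated by r and s has exactly two orbits of size 8 on the
16-element set {1,3,4,5,6,7,9,10,14,16,18,20,21,22,23,24}, namely
{1,3,4,5,9,14,20,24} and {6,7,10,16,18,21,22,23}. -/
theorem Q8_two_orbits_of_size_eight :
    MulAction.orbit ↥(Subgroup.closure ({r, s} : Set (Equiv.Perm (Fin 24))))
        (1 : Fin 24) = ({1, 3, 4, 5, 9, 14, 20, 24} : Set (Fin 24)) ∧
    MulAction.orbit ↥(Subgroup.closure ({r, s} : Set (Equiv.Perm (Fin 24))))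
        (6 : Fin 24) = ({6, 7, 10, 16, 18, 21, 22, 23} : Set (Fin 24)) ∧
    ({1, 3, 4, 5, 9, 14, 20, 24} : Set (Fin 24)).ncard = 8 ∧
    ({6, 7, 10, 16, 18, 21, 22, 23} : Set (Fin 24)).ncard = 8 ∧
    ({1, 3, 4, 5, 9, 14, 20, 24} : Set (Fin 24)) ∪
        ({6, 7, 10, 16, 18, 21, 22, 23} : Set (Fin 24)) =
      ({1, 3, 4, 5, 6, 7, 9, 10, 14, 16, 18, 20, 21, 22, 23, 24} : Set (Fin 24)) := by
  have hrm : r ∈ Subgroup.closure ({r, s} : Set (Equiv.Perm (Fin 24))) :=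
    Subgroup.subset_closure (Or.inl rfl)
  have hsm : s ∈ Subgroup.closure ({r, s} : Set (Equiv.Perm (Fin 24))) :=
    Subgroup.subset_closure (Or.inr rfl)
  have mem_orb : ∀ (x y : Fin 24) (g : Equiv.Perm (Fin 24))
      (hg : g ∈ Subgroup.closure ({r, s} : Set (Equiv.Perm (Fin 24)))), g x = y →
      y ∈ MulAction.orbit ↥(Subgroup.closure ({r, s} : Set (Equiv.Perm (Fin 24)))) x := by
    intro x y g hg h
    exact ⟨⟨g, hg⟩, h⟩
  refine ⟨?_, ?_, ?_, ?_, ?_⟩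
  · apply Set.Subset.antisymm
    · refine subset_trans
        (orbit_subset ({1, 3, 4, 5, 9, 14, 20, 24} : Finset (Fin 24))
          (by decide) (by decide) 1 (by decide)) ?_
      intro y hy; simpa using hy
    · intro y hy
      simp only [Set.mem_insert_iff, Set.mem_singleton_iff] at hy
      rcases hy with rfl | rfl | rfl | rfl | rfl | rfl | rfl | rfl
      · exact mem_orb _ _ 1 (one_mem _) (by decide)
      · exact mem_orb _ _ s hsm (by decide)
      · exact mem_orb _ _ r hrm (by decide)
      · exact mem_orb _ _ (r * r * r) (mul_mem (mul_mem hrm hrm) hrm) (by decide)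
      · exact mem_orb _ _ (r * r) (mul_mem hrm hrm) (by decide)
      · exact mem_orb _ _ (s * r) (mul_mem hsm hrm) (by decide)
      · exact mem_orb _ _ (s * r * r * r)
          (mul_mem (mul_mem (mul_mem hsm hrm) hrm) hrm) (by decide)
      · exact mem_orb _ _ (s * s * s) (mul_mem (mul_mem hsm hsm) hsm) (by decide)
  · apply Set.Subset.antisymm
    · refine subset_trans
        (orbit_subset ({6, 7, 10, 16, 18, 21, 22, 23} : Finset (Fin 24))
          (by decide) (by decide) 6 (by decide)) ?_
      intro y hy; simpa using hy
    · intro y hy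
      simp only [Set.mem_insert_iff, Set.mem_singleton_iff] at hy
      rcases hy with rfl | rfl | rfl | rfl | rfl | rfl | rfl | rfl
      · exact mem_orb _ _ 1 (one_mem _) (by decide)
      · exact mem_orb _ _ (r * r * r) (mul_mem (mul_mem hrm hrm) hrm) (by decide)
      · exact mem_orb _ _ (s * s * s) (mul_mem (mul_mem hsm hsm) hsm) (by decide)
      · exact mem_orb _ _ (s * r) (mul_mem hsm hrm) (by decide)
      · exact mem_orb _ _ r hrm (by decide)
      · exact mem_orb _ _ (r * r) (mul_mem hrm hrm) (by decide)
      · exact mem_orb _ _ s hsm (by decide)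
      · exact mem_orb _ _ (s * r * r * r)
          (mul_mem (mul_mem (mul_mem hsm hrm) hrm) hrm) (by decide)
  · have h : ({1, 3, 4, 5, 9, 14, 20, 24} : Set (Fin 24)) =
        (({1, 3, 4, 5, 9, 14, 20, 24} : Finset (Fin 24)) : Set (Fin 24)) := by simp
    rw [h, Set.ncard_coe_finset]; decide
  · have h : ({6, 7, 10, 16, 18, 21, 22, 23} : Set (Fin 24)) =
        (({6, 7, 10, 16, 18, 21, 22, 23} : Finset (Fin 24)) : Set (Fin 24)) := by simp
    rw [h, Set.ncard_coe_finset]; decide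
  · ext y
    simp only [Set.mem_union, Set.mem_insert_iff, Set.mem_singleton_iff]
    tauto
end
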